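/- Consider two players A and B with budget 100 each and three identical battles with Tullock contest success function p = w_A/(w_A + w_B). Suppose after the first battle (won by A, with realized spendings w_A¹, w_B¹ < 100), in the final battle both spend all remaining budget. Then the pair (w_A², w_B²) with w_A² = (100 - w_A¹)/2 and w_B² = (100 - w_B¹)/2 is a critical point of A's winning probability v_A = p² + (1-p²)·p³ with respect to (w_A², w_B²), where p² = w_A²/(w_A²+w_B²) and p³ = (100-w_A¹-w_A²)/(200-w_A¹-w_A²-w_B¹-w_B²). -/

import Mathlib

theorem stmt_7 (wA1 wB1 : ℝ) (hA1 : 0 < wA1) (hA1' : wA1 < 100)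
    (hB1 : 0 < wB1) (hB1' : wB1 < 100) :
    let v : ℝ → ℝ → ℝ := fun a b =>
      a / (a + b) + (1 - a / (a + b)) *
        ((100 - wA1 - a) / (200 - wA1 - a - wB1 - b))
    let a0 : ℝ := (100 - wA1) / 2
    let b0 : ℝ := (100 - wB1) / 2
    deriv (fun a => v a b0) a0 = 0 ∧ deriv (fun b => v a0 b) b0 = 0 := by
  intro v a0 b0
  have ha0 : a0 = (100 - wA1) / 2 := rfl
  have hb0 : b0 = (100 - wB1) / 2 := rfl
  have hs : a0 + b0 ≠ 0 := by rw [ha0, hb0]; nlinarith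
  have ht : 200 - wA1 - a0 - wB1 - b0 ≠ 0 := by rw [ha0, hb0]; nlinarith
  constructor
  · -- derivative in a
    have h1 : HasDerivAt (fun a : ℝ => a / (a + b0))
        ((1 * (a0 + b0) - a0 * 1) / (a0 + b0) ^ 2) a0 :=
      (hasDerivAt_id a0).div ((hasDerivAt_id a0).add_const b0) hs
    have hnum : HasDerivAt (fun a : ℝ => 100 - wA1 - a) (-1) a0 :=
      (hasDerivAt_id a0).const_sub (100 - wA1)
    have hden : HasDerivAt (fun a : ℝ => 200 - wA1 - a - wB1 - b0) (-1) a0 := by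
      have := (((hasDerivAt_id a0).const_sub (200 - wA1)).sub_const wB1).sub_const b0
      simpa using this
    have h3 : HasDerivAt (fun a : ℝ => (100 - wA1 - a) / (200 - wA1 - a - wB1 - b0))
        (((-1) * (200 - wA1 - a0 - wB1 - b0) - (100 - wA1 - a0) * (-1)) /
          (200 - wA1 - a0 - wB1 - b0) ^ 2) a0 := hnum.div hden ht
    have h4 : HasDerivAt (fun a : ℝ => 1 - a / (a + b0))
        (-((1 * (a0 + b0) - a0 * 1) / (a0 + b0) ^ 2)) a0 := h1.const_sub 1
    have H := h1.add (h4.mul h3)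
    rw [(show HasDerivAt (fun a => v a b0) _ a0 from H).deriv]
    have hc : (0:ℝ) < 200 - wA1 - wB1 := by linarith
    have e1 : a0 + b0 = (200 - wA1 - wB1) / 2 := by rw [ha0, hb0]; ring
    have e2 : 200 - wA1 - a0 - wB1 - b0 = (200 - wA1 - wB1) / 2 := by rw [ha0, hb0]; ring
    have e3 : 100 - wA1 - a0 = (100 - wA1) / 2 := by rw [ha0]; ring
    rw [e1, e2, e3, ha0]
    have hS : (200 - wA1 - wB1) / 2 ≠ 0 := by positivity
    field_simp
    ring
  · -- derivative in b
    have h1 : HasDerivAt (fun b : ℝ => a0 / (a0 + b))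
        ((0 * (a0 + b0) - a0 * 1) / (a0 + b0) ^ 2) b0 :=
      (hasDerivAt_const b0 a0).div ((hasDerivAt_id b0).const_add a0) hs
    have hnum : HasDerivAt (fun _ : ℝ => 100 - wA1 - a0) (0 : ℝ) b0 :=
      hasDerivAt_const b0 _
    have hden : HasDerivAt (fun b : ℝ => 200 - wA1 - a0 - wB1 - b) (-1) b0 :=
      (hasDerivAt_id b0).const_sub (200 - wA1 - a0 - wB1)
    have h3 : HasDerivAt (fun b : ℝ => (100 - wA1 - a0) / (200 - wA1 - a0 - wB1 - b))
        ((0 * (200 - wA1 - a0 - wB1 - b0) - (100 - wA1 - a0) * (-1)) /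
          (200 - wA1 - a0 - wB1 - b0) ^ 2) b0 := hnum.div hden ht
    have h4 : HasDerivAt (fun b : ℝ => 1 - a0 / (a0 + b))
        (-((0 * (a0 + b0) - a0 * 1) / (a0 + b0) ^ 2)) b0 := h1.const_sub 1
    have H := h1.add (h4.mul h3)
    rw [(show HasDerivAt (fun b => v a0 b) _ b0 from H).deriv]
    have hc : (0:ℝ) < 200 - wA1 - wB1 := by linarith
    have e1 : a0 + b0 = (200 - wA1 - wB1) / 2 := by rw [ha0, hb0]; ring
    have e2 : 200 - wA1 - a0 - wB1 - b0 = (200 - wA1 - wB1) / 2 := by rw [ha0, hb0]; ring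
    have e3 : 100 - wA1 - a0 = (100 - wA1) / 2 := by rw [ha0]; ring
    rw [e1, e2, e3, ha0]
    have hS : (200 - wA1 - wB1) / 2 ≠ 0 := by positivity
    field_simp
    ring
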